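/- Closed form of the exterior L∞ integral: Let R > 0 and let f₀ : ℝ → ℝ be a probability density function that is symmetric around 0 and non-increasing on [0, ∞). Then for every d ∈ ℕ, d ≥ 1, ∫_{{w ∈ ℝ^d : ‖w‖_∞ > R}} ∏_{i=1}^d ( sup_{x_i: |x_i| ≤ R} f₀(w_i − x_i) ) dw = (1 + 2R f₀(0))^d − (2R f₀(0))^d. -/

import Mathlib

open MeasureTheory
open scoped BigOperators

/-- Closed form of the exterior `L∞` integral:
`∫_{‖w‖_∞ > R} ∏_i (sup_{|x_i| ≤ R} f₀(w_i - x_i)) dw = (1 + 2R f₀(0))^d - (2R f₀(0))^d`.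
(The norm on `Fin d → ℝ` is the sup norm.) -/
theorem exterior_Linf_integral_closed_form
    (R : ℝ) (hR : 0 < R)
    (f0 : ℝ → ℝ)
    (h_nonneg : ∀ x, 0 ≤ f0 x) (h_meas : Measurable f0)
    (h_int : ∫ x, f0 x = 1)
    (h_symm : ∀ x, f0 (-x) = f0 x)
    (h_mono : ∀ x y, 0 ≤ x → x ≤ y → f0 y ≤ f0 x)
    (d : ℕ) (hd : 1 ≤ d) :
    (∫ w in {w : Fin d → ℝ | R < ‖w‖},
        ∏ i, ⨆ x ∈ Set.Icc (-R) R, f0 (w i - x))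
      = (1 + 2 * R * f0 0) ^ d - (2 * R * f0 0) ^ d := by
  classical
  have habs : ∀ t : ℝ, f0 |t| = f0 t := by
    intro t
    rcases le_or_gt 0 t with h | h
    · rw [abs_of_nonneg h]
    · rw [abs_of_neg h, h_symm]
  have hmono' : ∀ a b : ℝ, |a| ≤ |b| → f0 b ≤ f0 a := by
    intro a b h
    rw [← habs a, ← habs b]
    exact h_mono _ _ (abs_nonneg a) h
  have hmax : ∀ t : ℝ, f0 t ≤ f0 0 := by
    intro t
    simpa using hmono' 0 t (by simp)
  set g : ℝ → ℝ := fun w => f0 (max (|w| - R) 0) with hgdef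
  -- the sup formula
  have hsup : ∀ w : ℝ, (⨆ x ∈ Set.Icc (-R) R, f0 (w - x)) = g w := by
    intro w
    set x0 : ℝ := max (-R) (min R w) with hx0
    have hx0mem : x0 ∈ Set.Icc (-R) R :=
      ⟨le_max_left _ _, max_le (by linarith) (min_le_left _ _)⟩
    have hx0abs : |w - x0| = max (|w| - R) 0 := by
      rcases le_or_gt w (-R) with h | h
      · have hx0v : x0 = -R := by
          rw [hx0, min_eq_right (by linarith : w ≤ R), max_eq_left h]
        rw [hx0v, abs_of_nonpos (by linarith), abs_of_nonpos (by linarith : w ≤ 0),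
          max_eq_left (by linarith)]
        ring
      · rcases le_or_gt w R with h2 | h2
        · have hx0v : x0 = w := by
            rw [hx0, min_eq_right h2, max_eq_right (by linarith)]
          rw [hx0v, sub_self, abs_zero, max_eq_right]
          have := abs_le.mpr ⟨le_of_lt h, h2⟩
          linarith
        · have hx0v : x0 = R := by
            rw [hx0, min_eq_left (le_of_lt h2), max_eq_right (by linarith)]
          rw [hx0v, abs_of_nonneg (by linarith), abs_of_nonneg (by linarith : (0:ℝ) ≤ w),
            max_eq_left (by linarith)]
    have hx0eq : f0 (w - x0) = g w := by
      show f0 (w - x0) = f0 (max (|w| - R) 0)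
      rw [← hx0abs, habs]
    have hub : ∀ x ∈ Set.Icc (-R) R, f0 (w - x) ≤ g w := by
      intro x hx
      have hxR : |x| ≤ R := abs_le.mpr ⟨hx.1, hx.2⟩
      have h1 : |max (|w| - R) 0| ≤ |w - x| := by
        rw [abs_of_nonneg (le_max_right _ _)]
        refine max_le ?_ (abs_nonneg _)
        have := abs_sub_abs_le_abs_sub w x
        linarith
      exact hmono' _ _ h1
    apply le_antisymm
    · refine ciSup_le fun x => ?_
      by_cases hx : x ∈ Set.Icc (-R) R
      · rw [ciSup_pos hx]; exact hub x hx
      · haveI : IsEmpty (x ∈ Set.Icc (-R) R) := isEmpty_Prop.mpr hx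
        rw [Real.iSup_of_isEmpty]
        exact h_nonneg _
    · have hbdd : BddAbove (Set.range fun x : ℝ =>
          ⨆ _ : x ∈ Set.Icc (-R) R, f0 (w - x)) := by
        refine ⟨f0 0, Set.forall_mem_range.mpr fun x => ?_⟩
        by_cases hx : x ∈ Set.Icc (-R) R
        · rw [ciSup_pos hx]; exact hmax _
        · haveI : IsEmpty (x ∈ Set.Icc (-R) R) := isEmpty_Prop.mpr hx
          rw [Real.iSup_of_isEmpty]; exact h_nonneg 0
      refine le_ciSup_of_le hbdd x0 ?_
      rw [ciSup_pos hx0mem]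
      exact hx0eq.ge
  -- integrability of f0
  have hf0int : Integrable f0 := by
    by_contra h
    rw [integral_undef h] at h_int
    exact zero_ne_one h_int
  -- splitting g into three indicator pieces
  have hgsplit : g = fun w => (Set.Icc (-R) R).indicator (fun _ => f0 0) w
      + (Set.Ioi R).indicator (fun w => f0 (w - R)) w
      + (Set.Iio (-R)).indicator (fun w => f0 (w + R)) w := by
    funext w
    show f0 (max (|w| - R) 0) = _
    simp only [Set.indicator_apply, Set.mem_Icc, Set.mem_Ioi, Set.mem_Iio]
    rcases lt_or_ge w (-R) with h | h
    · rw [if_neg (by push_neg; intro h'; linarith), if_neg (by linarith),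
        if_pos h]
      have : max (|w| - R) 0 = -(w + R) := by
        rw [abs_of_nonpos (by linarith), max_eq_left (by linarith)]
        ring
      rw [this, h_symm]
      ring
    · rcases le_or_gt w R with h2 | h2
      · rw [if_pos ⟨h, h2⟩, if_neg (by linarith), if_neg (by linarith)]
        have : max (|w| - R) 0 = 0 := by
          have := abs_le.mpr ⟨h, h2⟩
          rw [max_eq_right]; linarith
        rw [this]
        ring
      · rw [if_neg (by push_neg; intro h'; linarith), if_pos h2,
          if_neg (by linarith)]
        have : max (|w| - R) 0 = w - R := by
          rw [abs_of_nonneg (by linarith), max_eq_left (by linarith)]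
        rw [this]
        ring
  have hvol : (volume (Set.Icc (-R) R)).toReal = 2 * R := by
    rw [Real.volume_Icc, ENNReal.toReal_ofReal (by linarith)]
    ring
  have hp1 : Integrable ((Set.Icc (-R) R).indicator (fun _ : ℝ => f0 0)) := by
    refine (IntegrableOn.integrable_indicator ?_ measurableSet_Icc)
    exact integrableOn_const (by simp [Real.volume_Icc])
  have hp2 : Integrable ((Set.Ioi R).indicator (fun w => f0 (w - R))) :=
    (hf0int.comp_sub_right R).integrableOn.integrable_indicator measurableSet_Ioi
  have hp3 : Integrable ((Set.Iio (-R)).indicator (fun w => f0 (w + R))) :=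
    (hf0int.comp_add_right R).integrableOn.integrable_indicator measurableSet_Iio
  have hgint : Integrable g := by
    rw [hgsplit]; exact (hp1.add hp2).add hp3
  -- value of ∫ g
  have h2 : ∫ w in Set.Ioi R, f0 (w - R) = ∫ w in Set.Ioi (0:ℝ), f0 w := by
    have heq : (Set.Ioi R).indicator (fun w => f0 (w - R))
        = fun w => (Set.Ioi (0:ℝ)).indicator f0 (w - R) := by
      funext w
      simp only [Set.indicator_apply, Set.mem_Ioi, sub_pos]
    rw [← integral_indicator measurableSet_Ioi, heq,
      integral_sub_right_eq_self (fun w => (Set.Ioi (0:ℝ)).indicator f0 w) R,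
      integral_indicator measurableSet_Ioi]
  have h3 : ∫ w in Set.Iio (-R), f0 (w + R) = ∫ w in Set.Iio (0:ℝ), f0 w := by
    have heq : (Set.Iio (-R)).indicator (fun w => f0 (w + R))
        = fun w => (Set.Iio (0:ℝ)).indicator f0 (w + R) := by
      funext w
      simp only [Set.indicator_apply, Set.mem_Iio]
      exact if_congr (by constructor <;> intro <;> linarith) rfl rfl
    rw [← integral_indicator measurableSet_Iio, heq,
      integral_add_right_eq_self (fun w => (Set.Iio (0:ℝ)).indicator f0 w) R,
      integral_indicator measurableSet_Iio]
  have hhalves : (∫ w in Set.Iio (0:ℝ), f0 w) + ∫ w in Set.Ioi (0:ℝ), f0 w = 1 := by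
    rw [← integral_Ici_eq_integral_Ioi]
    exact (intervalIntegral.integral_Iio_add_Ici (b := (0:ℝ)) hf0int.integrableOn
      hf0int.integrableOn).trans h_int
  have hI12 : Integrable (fun w => (Set.Icc (-R) R).indicator (fun _ : ℝ => f0 0) w
      + (Set.Ioi R).indicator (fun w => f0 (w - R)) w) := hp1.add hp2
  have hgval : ∫ w, g w = 1 + 2 * R * f0 0 := by
    rw [hgsplit, integral_add hI12 hp3, integral_add hp1 hp2,
      integral_indicator measurableSet_Icc, integral_indicator measurableSet_Ioi,
      integral_indicator measurableSet_Iio, setIntegral_const, h2, h3, measureReal_def, hvol]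
    simp only [smul_eq_mul]
    linear_combination hhalves
  -- rewrite the integrand
  simp only [hsup]
  -- the ball
  have hball : {w : Fin d → ℝ | ‖w‖ ≤ R}
      = Set.pi Set.univ (fun _ : Fin d => Set.Icc (-R) R) := by
    ext w
    simp only [Set.mem_setOf_eq, Set.mem_pi, Set.mem_univ, forall_true_left, Set.mem_Icc]
    rw [pi_norm_le_iff_of_nonneg hR.le]
    simp [Real.norm_eq_abs, abs_le]
  have hmeas_ball : MeasurableSet {w : Fin d → ℝ | ‖w‖ ≤ R} := by
    rw [hball]
    exact MeasurableSet.univ_pi fun i => measurableSet_Icc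
  have hFint : Integrable (fun w : Fin d → ℝ => ∏ i, g (w i)) :=
    Integrable.fintype_prod fun _ => hgint
  have h_full : ∫ w : Fin d → ℝ, ∏ i, g (w i) = (1 + 2 * R * f0 0) ^ d := by
    rw [volume_pi, integral_fintype_prod_eq_pow (ι := Fin d) g, hgval, Fintype.card_fin]
  have h_ball_val : ∫ w in {w : Fin d → ℝ | ‖w‖ ≤ R}, ∏ i, g (w i)
      = (2 * R * f0 0) ^ d := by
    have h1 : ∀ w ∈ {w : Fin d → ℝ | ‖w‖ ≤ R}, (∏ i, g (w i)) = (f0 0) ^ d := by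
      intro w hw
      have hwi : ∀ i, g (w i) = f0 0 := by
        intro i
        have hwm : w ∈ Set.pi Set.univ (fun _ : Fin d => Set.Icc (-R) R) := by
          rw [← hball]; exact hw
        have h := hwm i (Set.mem_univ i)
        simp only [Set.mem_Icc] at h
        have : max (|w i| - R) 0 = 0 := by
          have := abs_le.mpr ⟨h.1, h.2⟩
          rw [max_eq_right]; linarith
        rw [hgdef]; simp only [this]
      rw [Finset.prod_congr rfl fun i _ => hwi i, Finset.prod_const, Finset.card_univ,
        Fintype.card_fin]
    rw [setIntegral_congr_fun hmeas_ball h1, setIntegral_const, hball, measureReal_def, volume_pi_pi]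
    simp only [Real.volume_Icc, Finset.prod_const, Finset.card_univ, Fintype.card_fin]
    rw [← ENNReal.ofReal_pow (by linarith), ENNReal.toReal_ofReal (pow_nonneg (by linarith) d),
      smul_eq_mul, ← mul_pow]
    ring_nf
  have hcompl : {w : Fin d → ℝ | R < ‖w‖} = {w : Fin d → ℝ | ‖w‖ ≤ R}ᶜ := by
    ext w; simp [not_le]
  have hsplit := integral_add_compl hmeas_ball hFint
  rw [hcompl]
  linarith [hsplit, h_ball_val, h_full]
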